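/- Suppose ψ : ℝ≥0 → ℝ≥0 defined by ψ(s) = s·u(s) is nondecreasing and u is nonincreasing with u > 0. Fix nonnegative reals s and z₁², z₂² ≥ 0 and β > β' > 0. Then u(β z₁² + β' z₂² + s)·β z₁² ≥ u(β' z₁² + β' z₂² + s)·β' z₁² ≥ u(β' z₁² + β z₂² + s)·β' z₁². -/
import Mathlib


/-- If `ψ(s) = s·u(s)` is nondecreasing and `u > 0` is nonincreasing, then for
`β > β' > 0`, `s ≥ 0` and reals `z₁, z₂`:
`u(β z₁² + β' z₂² + s)·β z₁² ≥ u(β' z₁² + β' z₂² + s)·β' z₁² ≥ u(β' z₁² + β z₂² + s)·β' z₁²`. -/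
theorem stmt6 (u : ℝ → ℝ)
    (hu_pos : ∀ s : ℝ, 0 ≤ s → 0 < u s)
    (hu_mono : ∀ s t : ℝ, 0 ≤ s → s ≤ t → u t ≤ u s)
    (hψ : ∀ s t : ℝ, 0 ≤ s → s ≤ t → s * u s ≤ t * u t)
    (β β' s : ℝ) (hβ : β > β') (hβ' : β' > 0) (hs : 0 ≤ s) (z₁ z₂ : ℝ) :
    u (β' * z₁ ^ 2 + β' * z₂ ^ 2 + s) * (β' * z₁ ^ 2) ≤
        u (β * z₁ ^ 2 + β' * z₂ ^ 2 + s) * (β * z₁ ^ 2) ∧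
      u (β' * z₁ ^ 2 + β * z₂ ^ 2 + s) * (β' * z₁ ^ 2) ≤
        u (β' * z₁ ^ 2 + β' * z₂ ^ 2 + s) * (β' * z₁ ^ 2) := by
  have hz₁ : (0:ℝ) ≤ z₁ ^ 2 := sq_nonneg z₁
  have hz₂ : (0:ℝ) ≤ z₂ ^ 2 := sq_nonneg z₂
  set a := β' * z₁ ^ 2 with ha
  set b := β * z₁ ^ 2 with hb
  set c := β' * z₂ ^ 2 + s with hc
  have ha0 : 0 ≤ a := mul_nonneg hβ'.le hz₁
  have hb0 : 0 ≤ b := mul_nonneg (hβ'.trans hβ).le hz₁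
  have hab : a ≤ b := mul_le_mul_of_nonneg_right hβ.le hz₁
  have hc0 : 0 ≤ c := add_nonneg (mul_nonneg hβ'.le hz₂) hs
  constructor
  · have h1 : (a + c) * u (a + c) ≤ (b + c) * u (b + c) :=
      hψ _ _ (add_nonneg ha0 hc0) (by linarith)
    have h2 : c * u (b + c) ≤ c * u (a + c) :=
      mul_le_mul_of_nonneg_left (hu_mono _ _ (add_nonneg ha0 hc0) (by linarith)) hc0
    have e1 : a + β' * z₂ ^ 2 + s = a + c := by simp [hc, add_assoc]
    have e2 : b + β' * z₂ ^ 2 + s = b + c := by simp [hc, add_assoc]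
    rw [e1, e2]; nlinarith [h1, h2]
  · have h3 : u (a + (β * z₂ ^ 2 + s)) ≤ u (a + c) := by
      apply hu_mono _ _ (add_nonneg ha0 hc0)
      have : β' * z₂ ^ 2 ≤ β * z₂ ^ 2 := mul_le_mul_of_nonneg_right hβ.le hz₂
      simp only [hc]; linarith
    have := mul_le_mul_of_nonneg_right h3 ha0
    simpa [hc, add_assoc] using this
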